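/- (Lemma, second bullet.) Let β > 0 and t₀ be real numbers, let φ : ℝ → ℝ be continuous, and define R_t := e^{−βt} ∫_{t₀}^t φ_u e^{βu} du for t ≥ t₀. If there is γ > 0 with φ_t = O(t^{−γ}) as t → ∞, then R_t = O(t^{−γ}) as t → ∞. -/

import Mathlib

open Filter Asymptotics MeasureTheory intervalIntegral Set

theorem stmt_13
    (β t₀ : ℝ) (hβ : 0 < β)
    (φ : ℝ → ℝ) (hφc : Continuous φ)
    (γ : ℝ) (hγ : 0 < γ)
    (hφ : φ =O[atTop] fun t : ℝ => t ^ (-γ)) :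
    (fun t => Real.exp (-(β * t)) * ∫ s in t₀..t, φ s * Real.exp (β * s))
      =O[atTop] fun t : ℝ => t ^ (-γ) := by
  obtain ⟨C, hC0, hC⟩ := hφ.exists_nonneg
  obtain ⟨T, hT⟩ := (eventually_atTop.mp hC.bound)
  set T1 : ℝ := max T (max 1 t₀) with hT1
  have hT1T : T ≤ T1 := le_max_left _ _
  have hT11 : (1:ℝ) ≤ T1 := le_trans (le_max_left _ _) (le_max_right _ _)
  have hT1t₀ : t₀ ≤ T1 := le_trans (le_max_right _ _) (le_max_right _ _)
  obtain ⟨M1, hM1⟩ := isCompact_Icc.exists_bound_of_continuousOn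
    (s := Icc t₀ T1) hφc.continuousOn
  set M : ℝ := max M1 C with hM
  have hM0 : 0 ≤ M := le_trans hC0 (le_max_right _ _)
  have hMall : ∀ s, t₀ ≤ s → |φ s| ≤ M := by
    intro s hs
    rcases le_total s T1 with h | h
    · exact le_trans (hM1 s ⟨hs, h⟩) (le_max_left _ _)
    · have h1 : (1:ℝ) ≤ s := le_trans hT11 h
      calc |φ s| = ‖φ s‖ := rfl
        _ ≤ C * ‖s ^ (-γ)‖ := hT s (le_trans hT1T h)
        _ ≤ C * 1 := by
            apply mul_le_mul_of_nonneg_left _ hC0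
            rw [Real.norm_eq_abs, abs_of_nonneg (Real.rpow_nonneg (by linarith) _)]
            exact Real.rpow_le_one_of_one_le_of_nonpos h1 (by linarith)
        _ ≤ M := by rw [mul_one]; exact le_max_right _ _
  have hcont : Continuous fun s => φ s * Real.exp (β * s) :=
    hφc.mul (Real.continuous_exp.comp (continuous_const.mul continuous_id))
  have heq : (fun t => Real.exp (-(β * t)) * ∫ s in t₀..t, φ s * Real.exp (β * s))
      = fun t => (Real.exp (-(β * t)) * ∫ s in t₀..(t/2), φ s * Real.exp (β * s))
        + (Real.exp (-(β * t)) * ∫ s in (t/2)..t, φ s * Real.exp (β * s)) := by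
    funext t
    rw [← intervalIntegral.integral_add_adjacent_intervals
      (hcont.intervalIntegrable t₀ (t/2)) (hcont.intervalIntegrable (t/2) t), mul_add]
  rw [heq]
  have h1 : (fun t => Real.exp (-(β * t)) * ∫ s in t₀..(t/2), φ s * Real.exp (β * s))
      =O[atTop] fun t : ℝ => t ^ (-γ) := by
    have hb : ∀ᶠ t in atTop, ‖Real.exp (-(β * t)) * ∫ s in t₀..(t/2), φ s * Real.exp (β * s)‖
        ≤ 1 * ‖M * |t/2 - t₀| * Real.exp (-(β * (t/2)))‖ := by
      filter_upwards [eventually_ge_atTop (2*t₀)] with t ht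
      have ht2 : t₀ ≤ t/2 := by linarith
      have hI : ‖∫ s in t₀..(t/2), φ s * Real.exp (β * s)‖
          ≤ (M * Real.exp (β * (t/2))) * |t/2 - t₀| := by
        apply intervalIntegral.norm_integral_le_of_norm_le_const
        intro x hx
        rw [Set.uIoc_of_le ht2] at hx
        rw [Real.norm_eq_abs, abs_mul, abs_of_pos (Real.exp_pos _)]
        exact mul_le_mul (hMall x hx.1.le)
          (Real.exp_le_exp.2 (mul_le_mul_of_nonneg_left hx.2 hβ.le))
          (Real.exp_pos _).le hM0
      simp only [one_mul, norm_mul, Real.norm_eq_abs, Real.abs_exp, abs_abs,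
        abs_of_nonneg hM0]
      calc Real.exp (-(β * t)) * |∫ s in t₀..(t/2), φ s * Real.exp (β * s)|
          ≤ Real.exp (-(β * t)) * ((M * Real.exp (β * (t/2))) * |t/2 - t₀|) :=
            mul_le_mul_of_nonneg_left hI (Real.exp_pos _).le
        _ = M * |t/2 - t₀| * (Real.exp (-(β * t)) * Real.exp (β * (t/2))) := by ring
        _ = M * |t/2 - t₀| * Real.exp (-(β * (t/2))) := by
            rw [← Real.exp_add]; ring_nf
    have ho : (fun t : ℝ => M * |t/2 - t₀| * Real.exp (-(β * (t/2))))
        =o[atTop] fun t : ℝ => t ^ (-γ) := by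
      rw [isLittleO_iff_tendsto']
      · have key : Tendsto (fun t : ℝ => M * (t ^ (γ + 1) * Real.exp (-(β/2) * t)))
            atTop (nhds 0) := by
          simpa using
            (tendsto_rpow_mul_exp_neg_mul_atTop_nhds_zero (γ+1) (β/2) (by linarith)).const_mul M
        apply squeeze_zero' ?_ ?_ key
        · filter_upwards [eventually_ge_atTop (1:ℝ)] with t ht
          exact div_nonneg (mul_nonneg (mul_nonneg hM0 (abs_nonneg _)) (Real.exp_pos _).le)
            (Real.rpow_nonneg (by linarith) _)
        · filter_upwards [eventually_ge_atTop (max 1 (2*|t₀|+2))] with t ht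
          have ht1 : (1:ℝ) ≤ t := le_trans (le_max_left _ _) ht
          have ht0 : (0:ℝ) < t := by linarith
          have h2 : 2*|t₀|+2 ≤ t := le_trans (le_max_right _ _) ht
          have habs : |t/2 - t₀| ≤ t := by
            rcases abs_cases t₀ with ⟨he, h0⟩ | ⟨he, h0⟩ <;> rw [he] at h2 <;>
              rw [abs_le] <;> constructor <;> linarith
          have hh : t ^ (γ+1) * t ^ (-γ) = t := by
            rw [← Real.rpow_add ht0]; simp
          rw [div_le_iff₀ (Real.rpow_pos_of_pos ht0 _)]
          calc M * |t/2 - t₀| * Real.exp (-(β * (t/2)))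
              ≤ M * t * Real.exp (-(β/2) * t) := by
                rw [show -(β * (t/2)) = -(β/2) * t by ring]
                exact mul_le_mul_of_nonneg_right (mul_le_mul_of_nonneg_left habs hM0)
                  (Real.exp_pos _).le
            _ = M * (t ^ (γ + 1) * Real.exp (-(β/2) * t)) * t ^ (-γ) := by
                linear_combination (M * Real.exp (-(β/2) * t)) * hh.symm
      · filter_upwards [eventually_ge_atTop (1:ℝ)] with t ht h
        exact absurd h (ne_of_gt (Real.rpow_pos_of_pos (by linarith) _))
    exact (IsBigO.of_bound 1 hb).trans ho.isBigO
  have h2 : (fun t => Real.exp (-(β * t)) * ∫ s in (t/2)..t, φ s * Real.exp (β * s))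
      =O[atTop] fun t : ℝ => t ^ (-γ) := by
    apply IsBigO.of_bound (C * 2 ^ γ / β)
    filter_upwards [eventually_ge_atTop (2*T1)] with t ht
    have hT10 : (0:ℝ) < T1 := by linarith
    have ht0 : (0:ℝ) < t := by linarith
    have ht2 : T1 ≤ t/2 := by linarith
    have ht2pos : (0:ℝ) < t/2 := by linarith
    have hIb : ‖∫ s in (t/2)..t, φ s * Real.exp (β * s)‖
        ≤ |∫ s in (t/2)..t, C * (t/2) ^ (-γ) * Real.exp (β * s)| := by
      apply intervalIntegral.norm_integral_le_abs_of_norm_le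
      · refine (ae_restrict_mem measurableSet_uIoc).mono fun x hx => ?_
        rw [Set.uIoc_of_le (by linarith : t/2 ≤ t)] at hx
        have hx1 : T1 ≤ x := le_trans ht2 hx.1.le
        have hx0 : 0 < x := lt_of_lt_of_le hT10 hx1
        rw [Real.norm_eq_abs, abs_mul, abs_of_pos (Real.exp_pos _)]
        apply mul_le_mul_of_nonneg_right _ (Real.exp_pos _).le
        calc |φ x| ≤ C * ‖x ^ (-γ)‖ := hT x (le_trans hT1T hx1)
          _ = C * x ^ (-γ) := by
              rw [Real.norm_eq_abs, abs_of_nonneg (Real.rpow_nonneg hx0.le _)]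
          _ ≤ C * (t/2) ^ (-γ) :=
              mul_le_mul_of_nonneg_left
                (Real.rpow_le_rpow_of_nonpos ht2pos hx.1.le (by linarith)) hC0
      · exact (Continuous.intervalIntegrable (continuous_const.mul (Real.continuous_exp.comp (continuous_const.mul continuous_id))) _ _)
    have hIcalc : (∫ s in (t/2)..t, C * (t/2) ^ (-γ) * Real.exp (β * s))
        = C * (t/2) ^ (-γ) * (Real.exp (β * t) / β - Real.exp (β * (t/2)) / β) := by
      rw [intervalIntegral.integral_const_mul]
      congr 1
      have hd : ∀ s ∈ Set.uIcc (t/2) t, HasDerivAt (fun u => Real.exp (β * u) / β)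
          (Real.exp (β * s)) s := by
        intro s _
        have h := (((Real.hasDerivAt_exp (β * s)).comp s
          ((hasDerivAt_id s).const_mul β)).div_const β)
        simp only [Function.comp, id_eq, mul_one] at h
        refine h.congr_deriv ?_
        field_simp [hβ.ne']
      rw [intervalIntegral.integral_eq_sub_of_hasDerivAt hd
        ((Continuous.intervalIntegrable (Real.continuous_exp.comp (continuous_const.mul continuous_id)) _ _))]
    have hmono : Real.exp (β * (t/2)) ≤ Real.exp (β * t) :=
      Real.exp_le_exp.2 (by nlinarith)
    have hnn : 0 ≤ Real.exp (β * t) / β - Real.exp (β * (t/2)) / β := by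
      rw [sub_nonneg]; gcongr
    rw [norm_mul, Real.norm_eq_abs (Real.exp _), abs_of_pos (Real.exp_pos _)]
    have hpow : (t/2:ℝ) ^ (-γ) = t ^ (-γ) * 2 ^ γ := by
      rw [Real.div_rpow ht0.le (by norm_num : (0:ℝ) ≤ 2),
        Real.rpow_neg (by norm_num : (0:ℝ) ≤ 2)]
      field_simp
    calc Real.exp (-(β * t)) * ‖∫ s in (t/2)..t, φ s * Real.exp (β * s)‖
        ≤ Real.exp (-(β * t)) *
            (C * (t/2) ^ (-γ) * (Real.exp (β * t) / β - Real.exp (β * (t/2)) / β)) := by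
          apply mul_le_mul_of_nonneg_left _ (Real.exp_pos _).le
          refine hIb.trans ?_
          rw [hIcalc, abs_of_nonneg (mul_nonneg (by positivity) hnn)]
      _ ≤ Real.exp (-(β * t)) * (C * (t/2) ^ (-γ) * (Real.exp (β * t) / β)) := by
          apply mul_le_mul_of_nonneg_left _ (Real.exp_pos _).le
          apply mul_le_mul_of_nonneg_left _ (by positivity)
          have : 0 < Real.exp (β * (t/2)) / β := by positivity
          linarith
      _ = C * (t/2) ^ (-γ) / β * (Real.exp (-(β * t)) * Real.exp (β * t)) := by ring
      _ = C * (t/2) ^ (-γ) / β := by rw [← Real.exp_add]; simp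
      _ = C * 2 ^ γ / β * ‖t ^ (-γ)‖ := by
          rw [hpow, Real.norm_eq_abs, abs_of_nonneg (Real.rpow_nonneg ht0.le _)]; ring
  exact h1.add h2
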